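/- The pay-as-bid mechanism satisfies egalitarian-equivalence (with reference bundle (0,0) for every profile), individual rationality, and no subsidy, but does not satisfy strategy-proofness. -/

import Mathlib

open scoped NNReal
open Finset

noncomputable section

/-- The `k`-th highest valuation (1-indexed); junk value `0` if `k` is out of range. -/
def vk (n k : ℕ) (v : Fin n → ℝ≥0) : ℝ≥0 :=
  if h : 0 < k ∧ k ≤ n then v (Tuple.sort v ⟨n - k, by omega⟩) else 0

/-- `v ∈ Ṽ` : the `(m+1)`-th through `n`-th highest valuations are all equal. -/
def tilde (n m : ℕ) (v : Fin n → ℝ≥0) : Prop :=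
  ∀ k, m + 1 ≤ k → k ≤ n → vk n k v = vk n (m + 1) v

/-- A mechanism: object assignment and transfers, allocating at most `m` objects. -/
structure Mechanism (n m : ℕ) where
  x : (Fin n → ℝ≥0) → Fin n → Bool
  t : (Fin n → ℝ≥0) → Fin n → ℝ
  feasible : ∀ v, (Finset.univ.filter fun i => x v i = true).card ≤ m

/-- Quasi-linear utility of a bundle `(x, t)` for valuation `w`. -/
def util (z : Bool × ℝ) (w : ℝ≥0) : ℝ := (if z.1 then (w : ℝ) else 0) - z.2

def Mechanism.bundle {n m : ℕ} (f : Mechanism n m) (v : Fin n → ℝ≥0) (i : Fin n) :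
    Bool × ℝ := (f.x v i, f.t v i)

def IR {n m : ℕ} (f : Mechanism n m) : Prop :=
  ∀ v i, 0 ≤ util (f.bundle v i) (v i)

def NoSubsidy {n m : ℕ} (f : Mechanism n m) : Prop :=
  ∀ v i, 0 ≤ f.t v i

def StrategyProof {n m : ℕ} (f : Mechanism n m) : Prop :=
  ∀ v (i : Fin n) (w : ℝ≥0),
    util (f.bundle (Function.update v i w) i) (v i) ≤ util (f.bundle v i) (v i)

def EgalitarianEquivalent {n m : ℕ} (f : Mechanism n m) : Prop :=
  ∀ v, ∃ z₀ : Bool × ℝ, ∀ i, util (f.bundle v i) (v i) = util z₀ (v i)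

def EnvyFree {n m : ℕ} (f : Mechanism n m) : Prop :=
  ∀ v i j, util (f.bundle v j) (v i) ≤ util (f.bundle v i) (v i)

/-- `x` maximizes total valuation among feasible object allocations. -/
def EffAlloc (n m : ℕ) (v : Fin n → ℝ≥0) (x : Fin n → Bool) : Prop :=
  ∀ y : Fin n → Bool, (Finset.univ.filter fun i => y i = true).card ≤ m →
    (∑ i, if y i then (v i : ℝ) else 0) ≤ ∑ i, if x i then (v i : ℝ) else 0

def Efficient {n m : ℕ} (f : Mechanism n m) : Prop :=
  ∀ v, EffAlloc n m v (f.x v)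

/-- Non-obvious manipulability: no report improves the sup or the inf (over others'
valuations) of an agent's utility compared to truth-telling. -/
def NOM {n m : ℕ} (f : Mechanism n m) : Prop :=
  ∀ (i : Fin n) (vi vi' : ℝ≥0),
    (⨆ w : Fin n → ℝ≥0, util (f.bundle (Function.update w i vi') i) vi) ≤
      (⨆ w : Fin n → ℝ≥0, util (f.bundle (Function.update w i vi) i) vi) ∧
    (⨅ w : Fin n → ℝ≥0, util (f.bundle (Function.update w i vi') i) vi) ≤
      (⨅ w : Fin n → ℝ≥0, util (f.bundle (Function.update w i vi) i) vi)

/-- Winner selection function. -/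
structure WSF (n m : ℕ) where
  τ : (Fin n → ℝ≥0) → Finset (Fin n)
  empty_of_not_tilde : ∀ v, ¬ tilde n m v → τ v = ∅
  mem_le : ∀ v i, i ∈ τ v → vk n (m + 1) v ≤ v i
  mem_of_lt : ∀ v, τ v ≠ ∅ → ∀ i, vk n (m + 1) v < v i → i ∈ τ v
  card_le : ∀ v, (τ v).card ≤ m

def Uncompromising {n m : ℕ} (T : WSF n m) : Prop :=
  ∀ v (i : Fin n) (w : ℝ≥0), i ∈ T.τ v → vk n (m + 1) v < w →
    i ∈ T.τ (Function.update v i w)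

/-- `f` is the `τ`-Vickrey mechanism combined with the no-trade. -/
def IsTauVickrey {n m : ℕ} (f : Mechanism n m) (T : WSF n m) : Prop :=
  ∀ v i, (f.x v i = true ↔ i ∈ T.τ v) ∧
    f.t v i = if i ∈ T.τ v then (vk n (m + 1) v : ℝ) else 0

/-- An efficient-Vickrey allocation at `v`: efficient object allocation, winners pay
the `(m+1)`-th highest valuation, losers pay nothing. -/
def IsEVAlloc (n m : ℕ) (v : Fin n → ℝ≥0) (z : Fin n → Bool × ℝ) : Prop :=
  (Finset.univ.filter fun i => (z i).1 = true).card ≤ m ∧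
  EffAlloc n m v (fun i => (z i).1) ∧
  ∀ i, (z i).2 = if (z i).1 then (vk n (m + 1) v : ℝ) else 0

/-- A pay-as-bid allocation at `v`: efficient object allocation, winners pay their
own valuation, losers pay nothing. -/
def IsPABAlloc (n m : ℕ) (v : Fin n → ℝ≥0) (z : Fin n → Bool × ℝ) : Prop :=
  (Finset.univ.filter fun i => (z i).1 = true).card ≤ m ∧
  EffAlloc n m v (fun i => (z i).1) ∧
  ∀ i, (z i).2 = if (z i).1 then (v i : ℝ) else 0

/-- The Vickrey mechanism: winners are exactly the agents with `v i > v^{m+1}`,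
winners pay `v^{m+1}`, losers get and pay nothing. -/
def IsVickrey {n m : ℕ} (f : Mechanism n m) : Prop :=
  ∀ v i, (f.x v i = true ↔ vk n (m + 1) v < v i) ∧
    f.t v i = if f.x v i then (vk n (m + 1) v : ℝ) else 0

/-- The efficient Vickrey mechanism combined with a pay-as-bid. -/
def IsEVPAB {n m : ℕ} (f : Mechanism n m) : Prop :=
  ∀ v, (tilde n m v → IsEVAlloc n m v (f.bundle v)) ∧
    (¬ tilde n m v → IsPABAlloc n m v (f.bundle v))

/-- The class `F` of mechanisms. -/
def MemF {n m : ℕ} (f : Mechanism n m) : Prop :=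
  EgalitarianEquivalent f ∧ NOM f ∧ Efficient f ∧ IR f ∧ NoSubsidy f

lemma win_of_single (n m : ℕ) (hm : 0 < m) (i : Fin n) (c : ℝ≥0) (hc : 0 < c)
    (x : Fin n → Bool)
    (hx : EffAlloc n m (fun j => if j = i then c else 0) x) : x i = true := by
  have hcard : (Finset.univ.filter fun j => (decide (j = i)) = true).card ≤ m := by
    have : (Finset.univ.filter fun j => (decide (j = i)) = true) = {i} := by
      ext j; simp
    rw [this, Finset.card_singleton]; exact hm
  have h := hx (fun j => decide (j = i)) hcard
  have hL : (∑ j, if decide (j = i) then ((if j = i then c else 0 : ℝ≥0) : ℝ) else 0)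
      = (c : ℝ) := by
    rw [Finset.sum_eq_single i]
    · simp
    · intro j _ hj; simp [hj]
    · simp
  have hR : (∑ j, if x j then ((if j = i then c else 0 : ℝ≥0) : ℝ) else 0)
      = if x i then (c : ℝ) else 0 := by
    rw [Finset.sum_eq_single i]
    · simp
    · intro j _ hj; simp [hj]
    · simp
  rw [hL, hR] at h
  by_contra hxi
  simp only [Bool.not_eq_true] at hxi
  rw [hxi] at h
  simp only [Bool.false_eq_true, if_false] at h
  have hc' : (0:ℝ) < c := by exact_mod_cast hc
  exact absurd h (not_le.mpr hc')

theorem stmt13 (n m : ℕ) (hm : 0 < m) (hmn : m < n) (f : Mechanism n m)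
    (hf : ∀ v, IsPABAlloc n m v (f.bundle v)) :
    (∀ v i, util (f.bundle v i) (v i) = util (false, (0 : ℝ)) (v i)) ∧
      IR f ∧ NoSubsidy f ∧ ¬ StrategyProof f := by
  have hutil : ∀ v i, util (f.bundle v i) (v i) = 0 := by
    intro v i
    have ht := (hf v).2.2 i
    simp only [util, ht]
    split <;> simp
  refine ⟨?_, ?_, ?_, ?_⟩
  · intro v i; rw [hutil v i]; simp [util]
  · intro v i; rw [hutil v i]
  · intro v i
    have ht := (hf v).2.2 i
    have : f.t v i = (f.bundle v i).2 := rfl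
    rw [this, ht]
    split <;> positivity
  · intro hsp
    have hn : 0 < n := lt_of_le_of_lt (Nat.zero_le m) hmn
    set i : Fin n := ⟨0, hn⟩
    set v : Fin n → ℝ≥0 := fun j => if j = i then 2 else 0 with hv
    have hupd : Function.update v i 1 = fun j => if j = i then (1 : ℝ≥0) else 0 := by
      funext j
      by_cases hj : j = i <;> simp [Function.update, hj, hv]
    have hsp' := hsp v i 1
    -- utility at truth is 0
    rw [hutil v i] at hsp'
    -- utility at deviation
    have heff := (hf (Function.update v i 1)).2.1
    rw [hupd] at heff
    have hwin : (f.bundle (Function.update v i 1) i).1 = true := by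
      rw [hupd]
      exact win_of_single n m hm i 1 one_pos _ heff
    have ht := (hf (Function.update v i 1)).2.2 i
    rw [hwin] at ht
    simp only [if_true] at ht
    have hvi : v i = 2 := by simp [hv]
    have : util (f.bundle (Function.update v i 1) i) (v i) = 1 := by
      simp only [util, hwin, if_true, ht, hvi, Function.update_self]
      norm_num
    rw [this] at hsp'
    norm_num at hsp'

end
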